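/- arXiv:2408.00314 — 5 statements merged into one kernel-verified Lean document; each statement's English description precedes it below -/
import Mathlib

section
/- Lemma 1. Assume |Q_i| ≤ 1 for every i = 1, …, t. Then for every k with 1 ≤ k ≤ t, the difference d_k = b_k − a_k between the elementary symmetric quantities built from the estimates and from the true power sums satisfies |d_k| ≤ Σ_{j=1}^k |ε_j| / j. -/
open Finset

/-- The elementary symmetric value `A m` of a nonneg family summing to `1` satisfies
`(m+1) * A (m+1) ≤ A m`. -/
private lemma esymm_step (r : ℕ) (p : Fin r → ℝ) (hp : ∀ j, 0 ≤ p j)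
    (hpsum : ∑ j, p j = 1) (m : ℕ) :
    ((m : ℝ) + 1) * ∑ T ∈ powersetCard (m + 1) (univ : Finset (Fin r)), ∏ j ∈ T, p j ≤
      ∑ S ∈ powersetCard m (univ : Finset (Fin r)), ∏ j ∈ S, p j := by
  have key : ((m : ℝ) + 1) * ∑ T ∈ powersetCard (m + 1) (univ : Finset (Fin r)), ∏ j ∈ T, p j
      = ∑ x ∈ (powersetCard (m + 1) (univ : Finset (Fin r))).sigma (fun T => T),
          p x.2 * ∏ i ∈ x.1.erase x.2, p i := by
    rw [mul_sum, Finset.sum_sigma]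
    refine Finset.sum_congr rfl ?_
    intro T hT
    have hcard : T.card = m + 1 := (Finset.mem_powersetCard.mp hT).2
    have : ∀ j ∈ T, p j * ∏ i ∈ T.erase j, p i = ∏ i ∈ T, p i := by
      intro j hj; exact Finset.mul_prod_erase T p hj
    rw [Finset.sum_congr rfl this, Finset.sum_const, hcard, nsmul_eq_mul]
    push_cast; ring
  rw [key]
  have key2 : ∑ x ∈ (powersetCard (m + 1) (univ : Finset (Fin r))).sigma (fun T => T),
        p x.2 * ∏ i ∈ x.1.erase x.2, p i
      = ∑ y ∈ (powersetCard m (univ : Finset (Fin r))).sigma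
          (fun S => (univ : Finset (Fin r)) \ S), p y.2 * ∏ i ∈ y.1, p i := by
    refine Finset.sum_bij' (fun x _ => (⟨x.1.erase x.2, x.2⟩ : Σ _ : Finset (Fin r), Fin r))
      (fun y _ => (⟨insert y.2 y.1, y.2⟩ : Σ _ : Finset (Fin r), Fin r)) ?_ ?_ ?_ ?_ ?_
    · intro x hx
      rw [Finset.mem_sigma] at hx ⊢
      obtain ⟨h1, h2⟩ := hx
      rw [Finset.mem_powersetCard] at h1
      constructor
      · rw [Finset.mem_powersetCard]
        exact ⟨Finset.Subset.trans (Finset.erase_subset _ _) h1.1,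
          by rw [Finset.card_erase_of_mem h2, h1.2]; omega⟩
      · simp [Finset.mem_sdiff]
    · intro y hy
      rw [Finset.mem_sigma] at hy ⊢
      obtain ⟨h1, h2⟩ := hy
      rw [Finset.mem_powersetCard] at h1
      rw [Finset.mem_sdiff] at h2
      constructor
      · rw [Finset.mem_powersetCard]
        refine ⟨?_, ?_⟩
        · intro z _; exact Finset.mem_univ z
        · rw [Finset.card_insert_of_notMem h2.2, h1.2]
      · exact Finset.mem_insert_self _ _
    · intro x hx
      rw [Finset.mem_sigma] at hx
      have := Finset.insert_erase hx.2
      simp [this]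
    · intro y hy
      rw [Finset.mem_sigma, Finset.mem_sdiff] at hy
      have := Finset.erase_insert hy.2.2
      simp [this]
    · intro x hx
      rfl
  rw [key2, Finset.sum_sigma]
  have hA : ∀ S : Finset (Fin r), 0 ≤ ∏ i ∈ S, p i :=
    fun S => Finset.prod_nonneg fun i _ => hp i
  calc ∑ S ∈ powersetCard m (univ : Finset (Fin r)),
        ∑ j ∈ (univ : Finset (Fin r)) \ S, p j * ∏ i ∈ S, p i
      ≤ ∑ S ∈ powersetCard m (univ : Finset (Fin r)),
        ∑ j ∈ (univ : Finset (Fin r)), p j * ∏ i ∈ S, p i := by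
        refine Finset.sum_le_sum ?_
        intro S _
        refine Finset.sum_le_sum_of_subset_of_nonneg (Finset.sdiff_subset) ?_
        intro j _ _
        exact mul_nonneg (hp j) (hA S)
    _ = ∑ S ∈ powersetCard m (univ : Finset (Fin r)), ∏ i ∈ S, p i := by
        refine Finset.sum_congr rfl ?_
        intro S _
        rw [← Finset.sum_mul, hpsum, one_mul]

private lemma esymm_le_one (r : ℕ) (p : Fin r → ℝ) (hp : ∀ j, 0 ≤ p j)
    (hpsum : ∑ j, p j = 1) (m : ℕ) :
    ∑ S ∈ powersetCard m (univ : Finset (Fin r)), ∏ j ∈ S, p j ≤ 1 := by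
  induction m with
  | zero => simp
  | succ m ih =>
    have h1 := esymm_step r p hp hpsum m
    have h2 : (0:ℝ) ≤ ∑ T ∈ powersetCard (m + 1) (univ : Finset (Fin r)), ∏ j ∈ T, p j :=
      Finset.sum_nonneg fun T _ => Finset.prod_nonneg fun i _ => hp i
    nlinarith [Nat.cast_nonneg (α := ℝ) m]

/-- Newton's identity for the evaluated elementary symmetric polynomials. -/
private lemma newton_real (r k : ℕ) (hk : 1 ≤ k) (p : Fin r → ℝ) :
    (k : ℝ) * ∑ S ∈ powersetCard k (univ : Finset (Fin r)), ∏ j ∈ S, p j =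
      ∑ i ∈ Icc 1 k, (-1 : ℝ) ^ (i - 1) *
        (∑ S ∈ powersetCard (k - i) (univ : Finset (Fin r)), ∏ j ∈ S, p j) *
        (∑ j, p j ^ i) := by
  have h : (k:ℝ) * ∑ S ∈ powersetCard k (univ : Finset (Fin r)), ∏ j ∈ S, p j =
      (-1:ℝ)^(k+1) * ∑ a ∈ (antidiagonal k).filter (fun a => a.1 < k),
        (-1:ℝ)^a.1 * (∑ S ∈ powersetCard a.1 (univ : Finset (Fin r)), ∏ j ∈ S, p j)
          * (∑ j, p j ^ a.2) := by
    have h := congrArg (MvPolynomial.eval p) (MvPolynomial.mul_esymm_eq_sum (Fin r) ℝ k)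
    simpa only [MvPolynomial.esymm, MvPolynomial.psum, map_mul, map_sum, map_pow, map_prod,
      MvPolynomial.eval_X, map_natCast, map_neg, map_one] using h
  rw [h, mul_sum]
  refine Finset.sum_bij' (fun a _ => a.2) (fun i _ => (k - i, i)) ?_ ?_ ?_ ?_ ?_
  case refine_1 =>
    intro a ha
    simp only [Finset.mem_filter, Finset.HasAntidiagonal.mem_antidiagonal] at ha
    simp only [Finset.mem_Icc]
    omega
  case refine_2 =>
    intro i hi
    simp only [Finset.mem_Icc] at hi
    simp only [Finset.mem_filter, Finset.HasAntidiagonal.mem_antidiagonal]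
    omega
  case refine_3 =>
    intro a ha
    simp only [Finset.mem_filter, Finset.HasAntidiagonal.mem_antidiagonal] at ha
    ext <;> simp <;> omega
  case refine_4 => intro i hi; rfl
  case refine_5 =>
    intro a ha
    simp only [Finset.mem_filter, Finset.HasAntidiagonal.mem_antidiagonal] at ha
    have h1 : a.1 = k - a.2 := by omega
    have hsign : (-1:ℝ)^(k+1) * (-1:ℝ)^a.1 = (-1:ℝ)^(a.2 - 1) := by
      rw [← pow_add]
      have : k + 1 + a.1 = (a.2 - 1) + 2 * (a.1 + 1) := by omega
      rw [this, pow_add, pow_mul]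
      norm_num
    rw [← mul_assoc, ← mul_assoc, hsign, h1]

/-- Telescoping identity for the error budget. -/
private lemma budget_sum (E : ℕ → ℝ) (n : ℕ) :
    (∑ m ∈ range n, ∑ j ∈ Icc 1 m, E j / j) + ∑ i ∈ Icc 1 n, E i =
      (n : ℝ) * ∑ j ∈ Icc 1 n, E j / j := by
  induction n with
  | zero => simp
  | succ n ih =>
    rw [Finset.sum_range_succ, Finset.sum_Icc_succ_top (by omega : 1 ≤ n + 1) E,
      Finset.sum_Icc_succ_top (by omega : 1 ≤ n + 1) (fun j => E j / (j : ℝ))]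
    have hne : ((n : ℝ) + 1) ≠ 0 := by positivity
    push_cast
    field_simp
    nlinarith [ih]

/-- **Lemma 1.** If `|Q i| ≤ 1` for `i = 1, …, t`, then the difference
`d k = b k - a k` between the Newton–Girard quantities built from the
estimates and the true elementary symmetric polynomials satisfies
`|d k| ≤ ∑_{j=1}^k |ε j| / j`, where `ε j = Q j - P j`. -/
theorem elementary_symmetric_error_bound
    (r t : ℕ) (hr : 1 ≤ r) (ht : 1 ≤ t)
    (p : Fin r → ℝ) (hp : ∀ j, 0 ≤ p j) (hpsum : ∑ j, p j = 1)
    (P : ℕ → ℝ) (hP : ∀ i, 1 ≤ i → P i = ∑ j, p j ^ i)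
    (a : ℕ → ℝ)
    (ha : ∀ n, a n = ∑ S ∈ Finset.powersetCard n (Finset.univ : Finset (Fin r)),
      ∏ j ∈ S, p j)
    (Q b : ℕ → ℝ) (hb0 : b 0 = 1)
    (hb : ∀ n, 1 ≤ n → n ≤ t →
      b n = (1 / (n : ℝ)) * ∑ i ∈ Icc 1 n, (-1 : ℝ) ^ (i - 1) * b (n - i) * Q i)
    (hQbd : ∀ i, 1 ≤ i → i ≤ t → |Q i| ≤ 1) :
    ∀ n, 1 ≤ n → n ≤ t → |b n - a n| ≤ ∑ j ∈ Icc 1 n, |Q j - P j| / (j : ℝ) := by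
  -- abbreviations
  set E : ℕ → ℝ := fun j => |Q j - P j| with hE
  set c : ℕ → ℝ := fun m => ∑ j ∈ Icc 1 m, E j / j with hc
  have ha0 : a 0 = 1 := by rw [ha]; simp
  have haN : ∀ m, |a m| ≤ 1 := by
    intro m
    rw [ha, abs_of_nonneg (Finset.sum_nonneg fun S _ => Finset.prod_nonneg fun i _ => hp i)]
    exact esymm_le_one r p hp hpsum m
  have hanewton : ∀ n, 1 ≤ n →
      a n = (1 / (n : ℝ)) * ∑ i ∈ Icc 1 n, (-1 : ℝ) ^ (i - 1) * a (n - i) * P i := by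
    intro n hn
    have hne : (n : ℝ) ≠ 0 := by positivity
    have h := newton_real r n hn p
    have h2 : (n : ℝ) * a n = ∑ i ∈ Icc 1 n, (-1 : ℝ) ^ (i - 1) * a (n - i) * P i := by
      rw [ha n, h]
      refine Finset.sum_congr rfl ?_
      intro i hi
      rw [Finset.mem_Icc] at hi
      rw [ha, hP i hi.1]
    rw [← h2]
    field_simp
  intro n
  induction n using Nat.strong_induction_on with
  | _ n IH =>
    intro hn1 hnt
    have hne : (n : ℝ) ≠ 0 := by positivity
    -- the combined recursion for the difference
    have hdiff : b n - a n = (1 / (n : ℝ)) * ∑ i ∈ Icc 1 n,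
        (-1 : ℝ) ^ (i - 1) * ((b (n - i) - a (n - i)) * Q i + a (n - i) * (Q i - P i)) := by
      rw [hb n hn1 hnt, hanewton n hn1, ← mul_sub, ← Finset.sum_sub_distrib]
      congr 1
      refine Finset.sum_congr rfl ?_
      intro i _
      ring
    -- bound each term
    have hterm : ∀ i ∈ Icc 1 n,
        |(-1 : ℝ) ^ (i - 1) * ((b (n - i) - a (n - i)) * Q i + a (n - i) * (Q i - P i))|
          ≤ c (n - i) + E i := by
      intro i hi
      rw [Finset.mem_Icc] at hi
      have hd : |b (n - i) - a (n - i)| ≤ c (n - i) := by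
        rcases Nat.eq_zero_or_pos (n - i) with h0 | hpos
        · rw [h0, hb0, ha0, hc]; simp
        · exact IH (n - i) (by omega) hpos (by omega)
      have hQ : |Q i| ≤ 1 := hQbd i hi.1 (le_trans hi.2 hnt)
      calc |(-1 : ℝ) ^ (i - 1) * ((b (n - i) - a (n - i)) * Q i + a (n - i) * (Q i - P i))|
          = |(b (n - i) - a (n - i)) * Q i + a (n - i) * (Q i - P i)| := by
            rw [abs_mul, abs_pow, abs_neg, abs_one, one_pow, one_mul]
        _ ≤ |(b (n - i) - a (n - i)) * Q i| + |a (n - i) * (Q i - P i)| := abs_add_le _ _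
        _ = |b (n - i) - a (n - i)| * |Q i| + |a (n - i)| * |Q i - P i| := by
            rw [abs_mul, abs_mul]
        _ ≤ c (n - i) * 1 + 1 * E i := by
            refine add_le_add ?_ ?_
            · exact mul_le_mul hd hQ (abs_nonneg _) (le_trans (abs_nonneg _) hd)
            · exact mul_le_mul_of_nonneg_right (haN (n - i)) (abs_nonneg _)
        _ = c (n - i) + E i := by ring
    -- reindex the budget sum
    have hreindex : ∑ i ∈ Icc 1 n, c (n - i) = ∑ m ∈ range n, c m := by
      refine Finset.sum_bij' (fun i _ => n - i) (fun m _ => n - m) ?_ ?_ ?_ ?_ ?_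
      · intro i hi; simp only [Finset.mem_Icc] at hi; simp only [Finset.mem_range]; omega
      · intro m hm; simp only [Finset.mem_range] at hm; simp only [Finset.mem_Icc]; omega
      · intro i hi; simp only [Finset.mem_Icc] at hi; omega
      · intro m hm; simp only [Finset.mem_range] at hm; omega
      · intro i _; rfl
    have hbudget := budget_sum E n
    calc |b n - a n|
        = |1 / (n : ℝ)| * |∑ i ∈ Icc 1 n,
            (-1 : ℝ) ^ (i - 1) * ((b (n - i) - a (n - i)) * Q i + a (n - i) * (Q i - P i))| := by
          rw [hdiff, abs_mul]
      _ ≤ (1 / (n : ℝ)) * ∑ i ∈ Icc 1 n, (c (n - i) + E i) := by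
          rw [abs_of_nonneg (by positivity : (0:ℝ) ≤ 1 / (n:ℝ))]
          refine mul_le_mul_of_nonneg_left ?_ (by positivity)
          exact le_trans (Finset.abs_sum_le_sum_abs _ _) (Finset.sum_le_sum hterm)
      _ = (1 / (n : ℝ)) * ((∑ m ∈ range n, c m) + ∑ i ∈ Icc 1 n, E i) := by
          rw [Finset.sum_add_distrib, hreindex]
      _ = (1 / (n : ℝ)) * ((n : ℝ) * c n) := by rw [hbudget]
      _ = c n := by field_simp
end

section
/- Truncated Newton identity (closed form of the recursion defect): let p_1, …, p_r be arbitrary real numbers, with power sums P_i = Σ_{j=1}^r p_j^i and elementary symmetric polynomials a_i (a_i = 0 for i > r). Then for all integers t ≥ 1 and k ≥ 1, Σ_{i=1}^t (−1)^{i−1} a_i P_{t+k−i} − P_{t+k} = (−1)^{t−1} Σ_{S ⊆ {1,…,r}, |S| = t+1} Σ_{j ∈ S} p_j^k ∏_{i ∈ S, i ≠ j} p_i. -/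
open Finset

lemma tni_swap_sum (r n k : ℕ) (p : Fin r → ℝ) :
    ∑ S ∈ powersetCard (n + 1) (univ : Finset (Fin r)), ∑ j ∈ univ \ S,
        (∏ i ∈ S, p i) * p j ^ k
      = ∑ T ∈ powersetCard (n + 2) (univ : Finset (Fin r)), ∑ j ∈ T,
          p j ^ k * ∏ i ∈ T.erase j, p i := by
  rw [Finset.sum_sigma', Finset.sum_sigma']
  refine Finset.sum_nbij' (fun x => ⟨insert x.2 x.1, x.2⟩) (fun x => ⟨x.1.erase x.2, x.2⟩)
    ?_ ?_ ?_ ?_ ?_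
  · rintro ⟨S, j⟩ hx
    simp only [Finset.mem_sigma, Finset.mem_powersetCard, Finset.mem_sdiff] at hx ⊢
    obtain ⟨⟨-, hcard⟩, -, hj⟩ := hx
    refine ⟨⟨Finset.subset_univ _, ?_⟩, Finset.mem_insert_self _ _⟩
    rw [Finset.card_insert_of_notMem hj, hcard]
  · rintro ⟨T, j⟩ hx
    simp only [Finset.mem_sigma, Finset.mem_powersetCard, Finset.mem_sdiff] at hx ⊢
    obtain ⟨⟨-, hcard⟩, hj⟩ := hx
    refine ⟨⟨Finset.subset_univ _, ?_⟩, Finset.mem_univ _, Finset.notMem_erase _ _⟩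
    rw [Finset.card_erase_of_mem hj, hcard]
    omega
  · rintro ⟨S, j⟩ hx
    simp only [Finset.mem_sigma, Finset.mem_sdiff] at hx
    simp [Finset.erase_insert hx.2.2]
  · rintro ⟨T, j⟩ hx
    simp only [Finset.mem_sigma] at hx
    simp [Finset.insert_erase hx.2]
  · rintro ⟨S, j⟩ hx
    simp only [Finset.mem_sigma, Finset.mem_sdiff] at hx
    simp only [Finset.erase_insert hx.2.2]
    ring

/-- Key lemma: `a (n+1) * P k = F n (k+1) + F (n+1) k`. -/
lemma tni_key (r n k : ℕ) (p : Fin r → ℝ) :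
    (∑ S ∈ powersetCard (n + 1) (univ : Finset (Fin r)), ∏ j ∈ S, p j) * (∑ j, p j ^ k)
      = (∑ S ∈ powersetCard (n + 1) (univ : Finset (Fin r)), ∑ j ∈ S,
          p j ^ (k + 1) * ∏ i ∈ S.erase j, p i)
        + ∑ S ∈ powersetCard (n + 2) (univ : Finset (Fin r)), ∑ j ∈ S,
            p j ^ k * ∏ i ∈ S.erase j, p i := by
  rw [Finset.sum_mul]
  have : ∀ S ∈ powersetCard (n + 1) (univ : Finset (Fin r)),
      (∏ j ∈ S, p j) * (∑ j, p j ^ k)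
        = (∑ j ∈ S, p j ^ (k + 1) * ∏ i ∈ S.erase j, p i)
          + ∑ j ∈ univ \ S, (∏ i ∈ S, p i) * p j ^ k := by
    intro S hS
    rw [Finset.mul_sum]
    rw [← Finset.sum_sdiff (Finset.subset_univ S), add_comm]
    congr 1
    refine Finset.sum_congr rfl fun j hj => ?_
    rw [← Finset.mul_prod_erase S p hj]
    ring
  rw [Finset.sum_congr rfl this, Finset.sum_add_distrib, tni_swap_sum]

/-- Truncated Newton identity (closed form of the recursion defect):
for arbitrary reals `p 1, …, p r`, all `t ≥ 1` and `k ≥ 1`,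
`∑_{i=1}^t (-1)^{i-1} a i * P (t+k-i) - P (t+k)
  = (-1)^{t-1} ∑_{|S| = t+1} ∑_{j ∈ S} p j ^ k * ∏_{i ∈ S, i ≠ j} p i`. -/
theorem truncated_newton_identity
    (r : ℕ) (p : Fin r → ℝ)
    (P : ℕ → ℝ) (hP : ∀ i, 1 ≤ i → P i = ∑ j, p j ^ i)
    (a : ℕ → ℝ)
    (ha : ∀ n, a n = ∑ S ∈ Finset.powersetCard n (Finset.univ : Finset (Fin r)),
      ∏ j ∈ S, p j) :
    ∀ t k : ℕ, 1 ≤ t → 1 ≤ k →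
      (∑ i ∈ Icc 1 t, (-1 : ℝ) ^ (i - 1) * a i * P (t + k - i)) - P (t + k) =
        (-1 : ℝ) ^ (t - 1) *
          ∑ S ∈ Finset.powersetCard (t + 1) (Finset.univ : Finset (Fin r)),
            ∑ j ∈ S, p j ^ k * ∏ i ∈ S.erase j, p i := by
  intro t k ht hk
  revert hk
  revert k
  induction t, ht using Nat.le_induction with
  | base =>
    intro k hk
    have hkey := tni_key r 0 k p
    have hF0 : (∑ S ∈ powersetCard (0 + 1) (univ : Finset (Fin r)), ∑ j ∈ S,
        p j ^ (k + 1) * ∏ i ∈ S.erase j, p i) = ∑ j, p j ^ (k + 1) := by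
      rw [powersetCard_one, Finset.sum_map]
      simp
    rw [show (Icc 1 1) = {1} by rfl, Finset.sum_singleton]
    rw [ha 1, hP (1 + k - 1) (by omega), hP (1 + k) (by omega)]
    have h1 : 1 + k - 1 = k := by omega
    have h2 : 1 + k = k + 1 := by omega
    rw [h1, h2]
    have ha1 : (∑ S ∈ powersetCard 1 (univ : Finset (Fin r)), ∏ j ∈ S, p j)
        = ∑ S ∈ powersetCard (0 + 1) (univ : Finset (Fin r)), ∏ j ∈ S, p j := rfl
    rw [ha1]
    rw [hF0] at hkey
    rw [show (1:ℕ) - 1 = 0 from rfl, pow_zero, one_mul, one_mul, hkey]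
    ring
  | succ t ht ih =>
    intro k hk
    have hIH := ih (k + 1) (by omega)
    have hkey := tni_key r t k p
    -- split off the top term
    rw [Finset.sum_Icc_succ_top (by omega : 1 ≤ t + 1)]
    have hexp : ∀ i ∈ Icc 1 t, (-1 : ℝ) ^ (i - 1) * a i * P (t + 1 + k - i)
        = (-1 : ℝ) ^ (i - 1) * a i * P (t + (k + 1) - i) := by
      intro i hi
      congr 2
      omega
    rw [Finset.sum_congr rfl hexp]
    have hPtk : P (t + 1 + k) = P (t + (k + 1)) := by congr 1; omega
    have hD : (∑ i ∈ Icc 1 t, (-1 : ℝ) ^ (i - 1) * a i * P (t + (k + 1) - i))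
        - P (t + (k + 1)) = (-1 : ℝ) ^ (t - 1) *
          ∑ S ∈ Finset.powersetCard (t + 1) (Finset.univ : Finset (Fin r)),
            ∑ j ∈ S, p j ^ (k + 1) * ∏ i ∈ S.erase j, p i := hIH
    rw [ha (t + 1), hP (t + 1 + k - (t + 1)) (by omega)]
    have h3 : t + 1 + k - (t + 1) = k := by omega
    rw [h3, hPtk]
    have hsign : ((-1 : ℝ)) ^ (t + 1 - 1) = (-1 : ℝ) ^ (t - 1) * (-1) := by
      have : t + 1 - 1 = (t - 1) + 1 := by omega
      rw [this, pow_succ]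
    have htt : t + 1 = t - 1 + 2 := by omega
    calc (∑ i ∈ Icc 1 t, (-1 : ℝ) ^ (i - 1) * a i * P (t + (k + 1) - i))
          + (-1 : ℝ) ^ (t + 1 - 1) *
            (∑ S ∈ powersetCard (t + 1) (univ : Finset (Fin r)), ∏ j ∈ S, p j)
            * (∑ j, p j ^ k) - P (t + (k + 1))
        = ((∑ i ∈ Icc 1 t, (-1 : ℝ) ^ (i - 1) * a i * P (t + (k + 1) - i))
            - P (t + (k + 1)))
          + (-1 : ℝ) ^ (t + 1 - 1) *
            ((∑ S ∈ powersetCard (t + 1) (univ : Finset (Fin r)), ∏ j ∈ S, p j)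
              * (∑ j, p j ^ k)) := by ring
      _ = (-1 : ℝ) ^ (t - 1) *
            (∑ S ∈ Finset.powersetCard (t + 1) (Finset.univ : Finset (Fin r)),
              ∑ j ∈ S, p j ^ (k + 1) * ∏ i ∈ S.erase j, p i)
          + (-1 : ℝ) ^ (t + 1 - 1) *
            ((∑ S ∈ powersetCard (t + 1) (univ : Finset (Fin r)),
                ∑ j ∈ S, p j ^ (k + 1) * ∏ i ∈ S.erase j, p i)
              + ∑ S ∈ powersetCard (t + 2) (univ : Finset (Fin r)),
                  ∑ j ∈ S, p j ^ k * ∏ i ∈ S.erase j, p i) := by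
          rw [hD, hkey]
      _ = (-1 : ℝ) ^ (t + 1 - 1) *
            ∑ S ∈ Finset.powersetCard (t + 1 + 1) (Finset.univ : Finset (Fin r)),
              ∑ j ∈ S, p j ^ k * ∏ i ∈ S.erase j, p i := by
          rw [hsign]
          have : t + 1 + 1 = t + 2 := rfl
          rw [this]
          ring
end

section
/- Bound on the recursion defect: for all integers t ≥ 1 and k ≥ 1, |Σ_{i=1}^t (−1)^{i−1} a_i P_{t+k−i} − P_{t+k}| ≤ (t + 1) · a_{t+1}. -/
open Finset

/-- Key reindexing identity: summing over pairs `(T, j ∈ T)` with `|T| = t+1`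
equals summing over pairs `(S, j ∉ S)` with `|S| = t`. -/
lemma recursion_defect_key (r : ℕ) (p : Fin r → ℝ) (t k : ℕ) :
    ∑ T ∈ powersetCard (t+1) (univ : Finset (Fin r)), ∑ j ∈ T, (∏ l ∈ T, p l) * p j ^ k
    = ∑ S ∈ powersetCard t (univ : Finset (Fin r)), ∑ j ∈ Sᶜ, (∏ l ∈ S, p l) * p j ^ (k+1) := by
  rw [Finset.sum_sigma', Finset.sum_sigma']
  refine Finset.sum_nbij' (fun x => ⟨x.1.erase x.2, x.2⟩)
    (fun x => ⟨insert x.2 x.1, x.2⟩) ?_ ?_ ?_ ?_ ?_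
  · rintro ⟨T, j⟩ hx
    simp only [Finset.mem_sigma, Finset.mem_powersetCard_univ] at hx ⊢
    refine ⟨?_, ?_⟩
    · simp [Finset.card_erase_of_mem hx.2, hx.1]
    · simp [Finset.mem_compl]
  · rintro ⟨S, j⟩ hx
    simp only [Finset.mem_sigma, Finset.mem_powersetCard_univ, Finset.mem_compl] at hx ⊢
    refine ⟨?_, Finset.mem_insert_self _ _⟩
    rw [Finset.card_insert_of_notMem hx.2, hx.1]
  · rintro ⟨T, j⟩ hx
    simp only [Finset.mem_sigma, Finset.mem_powersetCard_univ] at hx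
    simp [Finset.insert_erase hx.2]
  · rintro ⟨S, j⟩ hx
    simp only [Finset.mem_sigma, Finset.mem_powersetCard_univ, Finset.mem_compl] at hx
    simp [Finset.erase_insert hx.2]
  · rintro ⟨T, j⟩ hx
    simp only [Finset.mem_sigma, Finset.mem_powersetCard_univ] at hx
    have := Finset.mul_prod_erase T p hx.2
    simp only []
    rw [← this, pow_succ]
    ring

/-- Bound on the recursion defect: for eigenvalues on the probability
simplex, all `t ≥ 1` and `k ≥ 1`,
`|∑_{i=1}^t (-1)^{i-1} a i * P (t+k-i) - P (t+k)| ≤ (t+1) * a (t+1)`. -/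
theorem recursion_defect_bound
    (r : ℕ) (hr : 1 ≤ r)
    (p : Fin r → ℝ) (hp : ∀ j, 0 ≤ p j) (hpsum : ∑ j, p j = 1)
    (P : ℕ → ℝ) (hP : ∀ i, 1 ≤ i → P i = ∑ j, p j ^ i)
    (a : ℕ → ℝ)
    (ha : ∀ n, a n = ∑ S ∈ Finset.powersetCard n (Finset.univ : Finset (Fin r)),
      ∏ j ∈ S, p j) :
    ∀ t k : ℕ, 1 ≤ t → 1 ≤ k →
      |(∑ i ∈ Icc 1 t, (-1 : ℝ) ^ (i - 1) * a i * P (t + k - i)) - P (t + k)| ≤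
        ((t : ℝ) + 1) * a (t + 1) := by
  have hp1 : ∀ j, p j ≤ 1 := by
    intro j
    rw [← hpsum]
    exact Finset.single_le_sum (fun i _ => hp i) (Finset.mem_univ j)
  set Q : ℕ → ℝ := fun m => ∑ j, p j ^ m with hQ
  set R : ℕ → ℕ → ℝ := fun t k =>
    ∑ S ∈ powersetCard t (univ : Finset (Fin r)), (∏ j ∈ S, p j) * ∑ j ∈ Sᶜ, p j ^ k with hR
  have ha0 : a 0 = 1 := by simp [ha 0]
  -- split of a (t+1) * Q k
  have hsplit : ∀ t k : ℕ, a (t+1) * Q k = R t (k+1) + R (t+1) k := by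
    intro t k
    have h1 : a (t+1) * Q k = ∑ T ∈ powersetCard (t+1) (univ : Finset (Fin r)),
        ((∑ j ∈ T, (∏ l ∈ T, p l) * p j ^ k) + (∏ l ∈ T, p l) * ∑ j ∈ Tᶜ, p j ^ k) := by
      have hQk : Q k = ∑ j, p j ^ k := rfl
      rw [ha, hQk, Finset.sum_mul]
      refine Finset.sum_congr rfl fun T _ => ?_
      rw [← Finset.sum_add_sum_compl T (fun j => p j ^ k), mul_add, Finset.mul_sum]
    rw [h1, Finset.sum_add_distrib, recursion_defect_key r p t k, hR]
    congr 1
    exact Finset.sum_congr rfl fun S _ => (Finset.mul_sum _ _ _).symm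
  -- main identity
  have main : ∀ t k : ℕ, 1 ≤ k →
      ∑ i ∈ range (t+1), (-1:ℝ)^i * a i * Q (t + k - i) = (-1)^t * R t k := by
    intro t
    induction t with
    | zero =>
      intro k hk
      simp [hR, ha0, hQ]
    | succ t ih =>
      intro k hk
      rw [Finset.sum_range_succ]
      have e1 : ∑ i ∈ range (t+1), (-1:ℝ)^i * a i * Q (t+1+k-i)
          = ∑ i ∈ range (t+1), (-1:ℝ)^i * a i * Q (t+(k+1)-i) := by
        refine Finset.sum_congr rfl fun i _ => ?_
        congr 2
        omega
      rw [e1, ih (k+1) (by omega)]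
      have hexp : t + 1 + k - (t + 1) = k := by omega
      rw [hexp, pow_succ]
      have := hsplit t k
      linear_combination (-(-1:ℝ)^t) * this
  intro t k ht hk
  have hQeq : ∀ m, 1 ≤ m → P m = Q m := fun m hm => hP m hm
  have hD : (∑ i ∈ Icc 1 t, (-1:ℝ)^(i-1) * a i * P (t+k-i)) - P (t+k)
      = -((-1:ℝ)^t * R t k) := by
    have h0 : ∑ i ∈ Icc 1 t, (-1:ℝ)^(i-1) * a i * P (t+k-i)
        = ∑ i ∈ Icc 1 t, -((-1:ℝ)^i * a i * Q (t+k-i)) := by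
      refine Finset.sum_congr rfl fun i hi => ?_
      rw [Finset.mem_Icc] at hi
      rw [hQeq (t+k-i) (by omega)]
      have hipow : (-1:ℝ)^i = -(-1:ℝ)^(i-1) := by
        conv_lhs => rw [show i = (i-1)+1 by omega]
        rw [pow_succ]; ring
      rw [hipow]; ring
    have hins : (range (t+1)) = insert 0 (Icc 1 t) := by
      ext x; simp [Finset.mem_range, Finset.mem_Icc]; omega
    have h1 : ∑ i ∈ range (t+1), (-1:ℝ)^i * a i * Q (t+k-i)
        = Q (t+k) + ∑ i ∈ Icc 1 t, (-1:ℝ)^i * a i * Q (t+k-i) := by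
      rw [hins, Finset.sum_insert (by simp)]
      simp [ha0]
    have h2 := main t k hk
    rw [h0, Finset.sum_neg_distrib, hQeq (t+k) (by omega)]
    rw [h1] at h2
    linarith
  rw [hD, abs_neg, abs_mul, abs_pow, abs_neg, abs_one, one_pow, one_mul]
  have hRnn : 0 ≤ R t k := by
    apply Finset.sum_nonneg
    intro S _
    exact mul_nonneg (Finset.prod_nonneg fun j _ => hp j)
      (Finset.sum_nonneg fun j _ => pow_nonneg (hp j) _)
  rw [abs_of_nonneg hRnn]
  -- bound R t k by the k = 1 version
  have hb1 : R t k ≤ ∑ S ∈ powersetCard t (univ : Finset (Fin r)),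
      (∏ l ∈ S, p l) * ∑ j ∈ Sᶜ, p j ^ 1 := by
    rw [hR]
    refine Finset.sum_le_sum fun S _ => ?_
    refine mul_le_mul_of_nonneg_left ?_ (Finset.prod_nonneg fun j _ => hp j)
    refine Finset.sum_le_sum fun j _ => ?_
    exact pow_le_pow_of_le_one (hp j) (hp1 j) hk
  -- the k = 1 version equals (t+1) * a (t+1)
  have hb2 : ∑ S ∈ powersetCard t (univ : Finset (Fin r)),
      (∏ l ∈ S, p l) * ∑ j ∈ Sᶜ, p j ^ 1 = ((t:ℝ)+1) * a (t+1) := by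
    have h := recursion_defect_key r p t 0
    have hL : ∑ T ∈ powersetCard (t+1) (univ : Finset (Fin r)),
        ∑ j ∈ T, (∏ l ∈ T, p l) * p j ^ 0
        = ((t:ℝ)+1) * a (t+1) := by
      rw [ha, Finset.mul_sum]
      refine Finset.sum_congr rfl fun T hT => ?_
      rw [Finset.mem_powersetCard_univ] at hT
      simp [Finset.sum_const, hT, nsmul_eq_mul]
    rw [← hL, h]
    exact Finset.sum_congr rfl fun S _ => by rw [Finset.mul_sum]
  linarith
end

section
/- Factorial-decay bound for elementary symmetric polynomials on the probability simplex: for every integer t with 0 ≤ t ≤ r − 1, the (t+1)-st elementary symmetric polynomial satisfies a_{t+1} ≤ (1 / (t+1)!) · (1 − t/r). -/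
open Finset


private def Esym (r : ℕ) (p : Fin r → ℝ) (n : ℕ) : ℝ :=
  ∑ S ∈ powersetCard n (univ : Finset (Fin r)), ∏ j ∈ S, p j

private def Xv (r : ℕ) (p : Fin r → ℝ) (n : ℕ) (i : Fin r) : ℝ :=
  ∑ S ∈ (powersetCard n (univ : Finset (Fin r))).filter (fun S => i ∈ S), ∏ j ∈ S, p j

private lemma Esym_nonneg (r : ℕ) (p : Fin r → ℝ) (hp : ∀ j, 0 ≤ p j) (n : ℕ) :
    0 ≤ Esym r p n :=
  sum_nonneg fun S _ => prod_nonneg fun j _ => hp j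

private lemma Xv_nonneg (r : ℕ) (p : Fin r → ℝ) (hp : ∀ j, 0 ≤ p j) (n : ℕ) (i : Fin r) :
    0 ≤ Xv r p n i :=
  sum_nonneg fun S _ => prod_nonneg fun j _ => hp j

private lemma Esym_zero (r : ℕ) (p : Fin r → ℝ) : Esym r p 0 = 1 := by
  simp [Esym]

private lemma Xv_sum (r : ℕ) (p : Fin r → ℝ) (n : ℕ) :
    ∑ i, Xv r p n i = n * Esym r p n := by
  unfold Xv Esym
  simp only [sum_filter]
  rw [sum_comm, mul_sum]
  refine sum_congr rfl fun S hS => ?_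
  rw [mem_powersetCard] at hS
  rw [sum_ite_mem, univ_inter, sum_const, hS.2, nsmul_eq_mul]

private lemma Xv_insert (r : ℕ) (p : Fin r → ℝ) (n : ℕ) (i : Fin r) :
    ∑ S ∈ (powersetCard n (univ : Finset (Fin r))).filter (fun S => i ∉ S),
      p i * ∏ j ∈ S, p j = Xv r p (n + 1) i := by
  classical
  unfold Xv
  refine sum_nbij' (fun S => insert i S) (fun S => S.erase i) ?_ ?_ ?_ ?_ ?_
  · intro S hS
    simp only [mem_filter, mem_powersetCard] at hS ⊢
    exact ⟨⟨subset_univ _, by rw [card_insert_of_notMem hS.2, hS.1.2]⟩, mem_insert_self i S⟩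
  · intro S hS
    simp only [mem_filter, mem_powersetCard] at hS ⊢
    refine ⟨⟨subset_univ _, ?_⟩, notMem_erase i S⟩
    rw [card_erase_of_mem hS.2, hS.1.2]
    omega
  · intro S hS
    simp only [mem_filter] at hS
    exact erase_insert hS.2
  · intro S hS
    simp only [mem_filter] at hS
    exact insert_erase hS.2
  · intro S hS
    simp only [mem_filter] at hS
    rw [prod_insert hS.2]

private lemma Esym_rec (r : ℕ) (p : Fin r → ℝ) (n : ℕ) :
    (∑ i, p i) * Esym r p n
      = (∑ i, p i * Xv r p n i) + (n + 1 : ℕ) * Esym r p (n + 1) := by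
  classical
  have h : (∑ i, p i) * Esym r p n
      = ∑ i, ((p i * Xv r p n i)
        + ∑ S ∈ (powersetCard n (univ : Finset (Fin r))).filter (fun S => i ∉ S),
            p i * ∏ j ∈ S, p j) := by
    rw [sum_mul]
    refine sum_congr rfl fun i _ => ?_
    unfold Esym Xv
    rw [← sum_filter_add_sum_filter_not (powersetCard n (univ : Finset (Fin r)))
      (fun S => i ∈ S) (fun S => ∏ j ∈ S, p j), mul_add]
    simp only [mul_sum]
  rw [h, sum_add_distrib]
  congr 1
  have : ∀ i : Fin r, ∑ S ∈ (powersetCard n (univ : Finset (Fin r))).filter (fun S => i ∉ S),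
      p i * ∏ j ∈ S, p j = Xv r p (n + 1) i := fun i => Xv_insert r p n i
  rw [sum_congr rfl fun i _ => this i, Xv_sum]

private lemma Esym_step (r : ℕ) (p : Fin r → ℝ) (hp : ∀ j, 0 ≤ p j)
    (hpsum : ∑ j, p j = 1) (n : ℕ) :
    (n + 1 : ℕ) * Esym r p (n + 1) ≤ Esym r p n := by
  have h := Esym_rec r p n
  rw [hpsum, one_mul] at h
  have hx : 0 ≤ ∑ i, p i * Xv r p n i :=
    sum_nonneg fun i _ => mul_nonneg (hp i) (Xv_nonneg r p hp n i)
  linarith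

private lemma Esym_factorial (r : ℕ) (p : Fin r → ℝ) (hp : ∀ j, 0 ≤ p j)
    (hpsum : ∑ j, p j = 1) (n : ℕ) :
    (n.factorial : ℝ) * Esym r p n ≤ 1 := by
  induction n with
  | zero => simp [Esym_zero]
  | succ n ih =>
      have h := Esym_step r p hp hpsum n
      have hfact : (0 : ℝ) ≤ (n.factorial : ℝ) := by positivity
      calc ((n + 1).factorial : ℝ) * Esym r p (n + 1)
          = (n.factorial : ℝ) * ((n + 1 : ℕ) * Esym r p (n + 1)) := by
            rw [Nat.factorial_succ]; push_cast; ring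
        _ ≤ (n.factorial : ℝ) * Esym r p n := by
            exact mul_le_mul_of_nonneg_left h hfact
        _ ≤ 1 := ih

private lemma Xv_diff (r : ℕ) (p : Fin r → ℝ) (n : ℕ) (i j : Fin r) (hij : i ≠ j) :
    Xv r p n i - Xv r p n j
      = (p i - p j) *
        ∑ S ∈ (powersetCard n (univ : Finset (Fin r))).filter (fun S => i ∈ S ∧ j ∉ S),
          ∏ k ∈ S.erase i, p k := by
  classical
  set P := powersetCard n (univ : Finset (Fin r)) with hP
  set D := ∑ S ∈ P.filter (fun S => i ∈ S ∧ j ∉ S), ∏ k ∈ S.erase i, p k with hD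
  have h1 : ∑ S ∈ P.filter (fun S => i ∈ S ∧ j ∉ S), ∏ k ∈ S, p k = p i * D := by
    rw [hD, mul_sum]
    refine sum_congr rfl fun S hS => ?_
    simp only [mem_filter] at hS
    rw [← mul_prod_erase S p hS.2.1]
  have h2 : ∑ S ∈ P.filter (fun S => j ∈ S ∧ i ∉ S), ∏ k ∈ S, p k = p j * D := by
    rw [hD, mul_sum]
    refine sum_nbij' (fun S => insert i (S.erase j)) (fun S => insert j (S.erase i)) ?_ ?_ ?_ ?_ ?_
    · intro S hS
      simp only [mem_filter, hP, mem_powersetCard] at hS ⊢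
      have hjS : j ∈ S := hS.2.1
      have hiS : i ∉ S := hS.2.2
      have hi' : i ∉ S.erase j := fun h => hiS (mem_of_mem_erase h)
      refine ⟨⟨subset_univ _, ?_⟩, mem_insert_self _ _, ?_⟩
      · have hn : 0 < n := by rw [← hS.1.2]; exact card_pos.mpr ⟨j, hjS⟩
        rw [card_insert_of_notMem hi', card_erase_of_mem hjS, hS.1.2]
        omega
      · simp only [mem_insert]
        push_neg
        exact ⟨fun h => hij h.symm, notMem_erase _ _⟩
    · intro S hS
      simp only [mem_filter, hP, mem_powersetCard] at hS ⊢
      have hiS : i ∈ S := hS.2.1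
      have hjS : j ∉ S := hS.2.2
      have hj' : j ∉ S.erase i := fun h => hjS (mem_of_mem_erase h)
      refine ⟨⟨subset_univ _, ?_⟩, mem_insert_self _ _, ?_⟩
      · have hn : 0 < n := by rw [← hS.1.2]; exact card_pos.mpr ⟨i, hiS⟩
        rw [card_insert_of_notMem hj', card_erase_of_mem hiS, hS.1.2]
        omega
      · simp only [mem_insert]
        push_neg
        exact ⟨hij, notMem_erase _ _⟩
    · intro S hS
      simp only [mem_filter] at hS
      have hiS : i ∉ S.erase j := fun h => hS.2.2 (mem_of_mem_erase h)
      show insert j ((insert i (S.erase j)).erase i) = S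
      rw [erase_insert hiS, insert_erase hS.2.1]
    · intro S hS
      simp only [mem_filter] at hS
      have hjS : j ∉ S.erase i := fun h => hS.2.2 (mem_of_mem_erase h)
      show insert i ((insert j (S.erase i)).erase j) = S
      rw [erase_insert hjS, insert_erase hS.2.1]
    · intro S hS
      simp only [mem_filter] at hS
      have hiS : i ∉ S.erase j := fun h => hS.2.2 (mem_of_mem_erase h)
      show ∏ k ∈ S, p k = p j * ∏ k ∈ (insert i (S.erase j)).erase i, p k
      rw [erase_insert hiS, ← mul_prod_erase S p hS.2.1]
  have hXi : Xv r p n i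
      = (∑ S ∈ P.filter (fun S => i ∈ S ∧ j ∈ S), ∏ k ∈ S, p k)
        + ∑ S ∈ P.filter (fun S => i ∈ S ∧ j ∉ S), ∏ k ∈ S, p k := by
    unfold Xv
    rw [← hP, ← sum_filter_add_sum_filter_not (P.filter (fun S => i ∈ S)) (fun S => j ∈ S),
      filter_filter, filter_filter]
  have hXj : Xv r p n j
      = (∑ S ∈ P.filter (fun S => i ∈ S ∧ j ∈ S), ∏ k ∈ S, p k)
        + ∑ S ∈ P.filter (fun S => j ∈ S ∧ i ∉ S), ∏ k ∈ S, p k := by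
    unfold Xv
    rw [← hP, ← sum_filter_add_sum_filter_not (P.filter (fun S => j ∈ S)) (fun S => i ∈ S),
      filter_filter, filter_filter]
    congr 2
    exact filter_congr fun S _ => by tauto
  rw [hXi, hXj, h1, h2]
  ring

private lemma cheb (r : ℕ) (p x : Fin r → ℝ)
    (h : ∀ i j : Fin r, 0 ≤ (p i - p j) * (x i - x j)) :
    (∑ i, p i) * (∑ i, x i) ≤ (r : ℝ) * ∑ i, p i * x i := by
  have key : (0 : ℝ) ≤ ∑ i : Fin r, ∑ j : Fin r, (p i - p j) * (x i - x j) :=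
    sum_nonneg fun i _ => sum_nonneg fun j _ => h i j
  have expand : ∑ i : Fin r, ∑ j : Fin r, (p i - p j) * (x i - x j)
      = 2 * ((r : ℝ) * ∑ i, p i * x i - (∑ i, p i) * (∑ i, x i)) := by
    have inner : ∀ i : Fin r, ∑ j : Fin r, (p i - p j) * (x i - x j)
        = (r : ℝ) * (p i * x i) - p i * (∑ j, x j) - x i * (∑ j, p j)
          + ∑ j, p j * x j := by
      intro i
      simp only [sub_mul, mul_sub, sum_sub_distrib, sum_const, card_univ,
        Fintype.card_fin, nsmul_eq_mul, ← mul_sum, ← sum_mul]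
      ring
    rw [sum_congr rfl fun i _ => inner i]
    simp only [sum_add_distrib, sum_sub_distrib, sum_const, card_univ,
      Fintype.card_fin, nsmul_eq_mul, ← mul_sum, ← sum_mul]
    ring
  linarith

/-- Factorial-decay bound for elementary symmetric polynomials on the
probability simplex: for `0 ≤ t ≤ r - 1`,
`a (t+1) ≤ (1 / (t+1)!) * (1 - t/r)`. -/
theorem esymm_factorial_decay
    (r t : ℕ) (hr : 1 ≤ r) (htr : t + 1 ≤ r)
    (p : Fin r → ℝ) (hp : ∀ j, 0 ≤ p j) (hpsum : ∑ j, p j = 1)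
    (a : ℕ → ℝ)
    (ha : ∀ n, a n = ∑ S ∈ Finset.powersetCard n (Finset.univ : Finset (Fin r)),
      ∏ j ∈ S, p j) :
    a (t + 1) ≤ (1 / ((t + 1).factorial : ℝ)) * (1 - (t : ℝ) / (r : ℝ)) := by
  have haE : a (t + 1) = Esym r p (t + 1) := by rw [ha]; rfl
  have hrpos : (0 : ℝ) < (r : ℝ) := by positivity
  -- monovariance of p and Xv
  have hmono : ∀ i j : Fin r, 0 ≤ (p i - p j) * (Xv r p t i - Xv r p t j) := by
    intro i j
    by_cases hij : i = j
    · simp [hij]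
    · rw [Xv_diff r p t i j hij, ← mul_assoc]
      exact mul_nonneg (mul_self_nonneg _)
        (sum_nonneg fun S _ => prod_nonneg fun k _ => hp k)
  have hcheb := cheb r p (Xv r p t) hmono
  rw [hpsum, one_mul, Xv_sum] at hcheb
  -- recurrence
  have hrec := Esym_rec r p t
  rw [hpsum, one_mul] at hrec
  have hfac := Esym_factorial r p hp hpsum t
  have hA : 0 ≤ Esym r p t := Esym_nonneg r p hp t
  have hB : 0 ≤ Esym r p (t + 1) := Esym_nonneg r p hp (t + 1)
  have hF : (0 : ℝ) < (t.factorial : ℝ) := by positivity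
  have hc : 0 ≤ 1 - (t : ℝ) / (r : ℝ) := by
    have : (t : ℝ) ≤ (r : ℝ) := by exact_mod_cast Nat.le_of_succ_le htr
    rw [sub_nonneg, div_le_one hrpos]
    exact this
  -- key inequality: (t+1) * E(t+1) ≤ (1 - t/r) * E t
  have h1 : ((t : ℝ) + 1) * Esym r p (t + 1) ≤ (1 - (t : ℝ) / (r : ℝ)) * Esym r p t := by
    have hsum : (t : ℝ) / (r : ℝ) * Esym r p t ≤ ∑ i, p i * Xv r p t i := by
      rw [div_mul_eq_mul_div, div_le_iff₀ hrpos]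
      nlinarith [hcheb]
    have : ((t + 1 : ℕ) : ℝ) * Esym r p (t + 1)
        = Esym r p t - ∑ i, p i * Xv r p t i := by linarith [hrec]
    push_cast at this
    nlinarith [hsum]
  rw [haE, Nat.factorial_succ]
  push_cast
  rw [div_mul_eq_mul_div, one_mul, le_div_iff₀ (by positivity)]
  nlinarith [mul_le_mul_of_nonneg_left h1 (le_of_lt hF),
    mul_le_mul_of_nonneg_left hfac hc]
end

section
/- Weighted truncation error: let t ≥ 1 be an integer. Then for every integer i ≥ 1, the truncated weighted power-sum sequence satisfies |P̃_{i,M} − P_{i,M}| ≤ i · (t + 1) · C · a_{t+1}. -/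
open Finset

private lemma esym_nonneg {r : ℕ} (p : Fin r → ℝ) (hp : ∀ j, 0 ≤ p j)
    (s : Finset (Fin r)) (n : ℕ) :
    0 ≤ ∑ S ∈ powersetCard n s, ∏ j ∈ S, p j :=
  sum_nonneg fun S _ => prod_nonneg fun j _ => hp j

private lemma esym_split {r : ℕ} (p : Fin r → ℝ) (j : Fin r) (n : ℕ) :
    ∑ S ∈ powersetCard (n+1) (univ : Finset (Fin r)), ∏ k ∈ S, p k
      = (∑ S ∈ powersetCard (n+1) ((univ : Finset (Fin r)).erase j), ∏ k ∈ S, p k)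
        + p j * ∑ S ∈ powersetCard n ((univ : Finset (Fin r)).erase j), ∏ k ∈ S, p k := by
  have hdisj : Disjoint (powersetCard (n+1) ((univ : Finset (Fin r)).erase j))
      ((powersetCard n ((univ : Finset (Fin r)).erase j)).image (insert j)) := by
    rw [disjoint_left]
    intro T hT hT'
    have h1 : j ∉ T := fun hj =>
      notMem_erase j univ ((mem_powersetCard.1 hT).1 hj)
    obtain ⟨S, _, rfl⟩ := mem_image.1 hT'
    exact h1 (mem_insert_self j S)
  conv_lhs => rw [← insert_erase (mem_univ j)]
  rw [powersetCard_succ_insert (notMem_erase j univ), sum_union hdisj]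
  congr 1
  rw [sum_image, mul_sum]
  · refine sum_congr rfl fun S hS => ?_
    have hj : j ∉ S := fun h => notMem_erase j univ ((mem_powersetCard.1 hS).1 h)
    rw [prod_insert hj]
  · intro x hx y hy hxy
    have hjx : j ∉ x := fun h => notMem_erase j univ ((mem_powersetCard.1 hx).1 h)
    have hjy : j ∉ y := fun h => notMem_erase j univ ((mem_powersetCard.1 hy).1 h)
    rw [← erase_insert hjx, ← erase_insert hjy, hxy]

private lemma esym_double {r : ℕ} (p : Fin r → ℝ) (n : ℕ) :
    ∑ j : Fin r, p j * ∑ S ∈ powersetCard n ((univ : Finset (Fin r)).erase j), ∏ k ∈ S, p k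
      = ((n : ℝ)+1) * ∑ T ∈ powersetCard (n+1) (univ : Finset (Fin r)), ∏ k ∈ T, p k := by
  have L : ∑ j : Fin r, p j * ∑ S ∈ powersetCard n ((univ : Finset (Fin r)).erase j), ∏ k ∈ S, p k
      = ∑ x ∈ (univ : Finset (Fin r)).sigma
          (fun j => powersetCard n ((univ : Finset (Fin r)).erase j)),
          ∏ k ∈ insert x.1 x.2, p k := by
    rw [sum_sigma]
    refine sum_congr rfl fun j _ => ?_
    rw [mul_sum]
    refine sum_congr rfl fun S hS => ?_
    have hj : j ∉ S := fun h => notMem_erase j univ ((mem_powersetCard.1 hS).1 h)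
    rw [prod_insert hj]
  have Rt : ∑ x ∈ (powersetCard (n+1) (univ : Finset (Fin r))).sigma (fun T => T),
        ∏ k ∈ x.1, p k
      = ((n : ℝ)+1) * ∑ T ∈ powersetCard (n+1) (univ : Finset (Fin r)), ∏ k ∈ T, p k := by
    rw [sum_sigma, mul_sum]
    refine sum_congr rfl fun T hT => ?_
    show ∑ _s ∈ T, ∏ k ∈ T, p k = _
    rw [sum_const, (mem_powersetCard.1 hT).2, nsmul_eq_mul]
    push_cast
    ring
  rw [L, ← Rt]
  refine sum_nbij' (fun x => ⟨insert x.1 x.2, x.1⟩) (fun x => ⟨x.2, x.1.erase x.2⟩)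
    ?_ ?_ ?_ ?_ ?_
  · rintro ⟨j, S⟩ hx
    rw [mem_sigma] at hx ⊢
    obtain ⟨-, hS⟩ := hx
    obtain ⟨hsub, hcard⟩ := mem_powersetCard.1 hS
    have hj : j ∉ S := fun h => notMem_erase j univ (hsub h)
    refine ⟨mem_powersetCard.2 ⟨subset_univ _, ?_⟩, mem_insert_self j S⟩
    rw [card_insert_of_notMem hj, hcard]
  · rintro ⟨T, j⟩ hx
    rw [mem_sigma] at hx ⊢
    obtain ⟨hT, hj⟩ := hx
    obtain ⟨hsub, hcard⟩ := mem_powersetCard.1 hT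
    refine ⟨mem_univ j, mem_powersetCard.2 ⟨?_, ?_⟩⟩
    · exact erase_subset_erase j hsub
    · rw [card_erase_of_mem hj, hcard]
      omega
  · rintro ⟨j, S⟩ hx
    rw [mem_sigma] at hx
    obtain ⟨-, hS⟩ := hx
    have hj : j ∉ S := fun h => notMem_erase j univ ((mem_powersetCard.1 hS).1 h)
    simp [erase_insert hj]
  · rintro ⟨T, j⟩ hx
    rw [mem_sigma] at hx
    obtain ⟨-, hj⟩ := hx
    simp [insert_erase hj]
  · rintro ⟨j, S⟩ _
    rfl

private lemma esym_telescope {r : ℕ} (p : Fin r → ℝ) (j : Fin r) (T : ℕ) :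
    ∑ n ∈ range (T+1),
        (-1:ℝ)^n * (∑ S ∈ powersetCard n (univ : Finset (Fin r)), ∏ k ∈ S, p k) * p j ^ (T-n)
      = (-1:ℝ)^T * ∑ S ∈ powersetCard T ((univ : Finset (Fin r)).erase j), ∏ k ∈ S, p k := by
  induction T with
  | zero => simp
  | succ T ihT =>
    rw [sum_range_succ]
    have hstep : ∀ n ∈ range (T+1),
        (-1:ℝ)^n * (∑ S ∈ powersetCard n (univ : Finset (Fin r)), ∏ k ∈ S, p k)
            * p j ^ (T+1-n)
        = p j * ((-1:ℝ)^n * (∑ S ∈ powersetCard n (univ : Finset (Fin r)), ∏ k ∈ S, p k)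
            * p j ^ (T-n)) := by
      intro n hn
      have h1 : T+1-n = (T-n)+1 := by have := mem_range.1 hn; omega
      rw [h1, pow_succ]
      ring
    rw [sum_congr rfl hstep, ← mul_sum, ihT, Nat.sub_self, pow_zero, esym_split p j T,
      pow_succ]
    ring

private lemma seq_bound (t : ℕ) (ht : 1 ≤ t) (B : ℝ) (hB : 0 ≤ B)
    (a E R : ℕ → ℝ)
    (ha1 : a 1 = 1)
    (hmono : ∀ k, a (k+1) ≤ a k)
    (hanonneg : ∀ n, 0 ≤ a n)
    (hE0 : ∀ i, 1 ≤ i → i ≤ t → E i = 0)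
    (hErec : ∀ s, t < s → E s = (∑ n ∈ Icc 1 t, (-1:ℝ)^(n-1) * a n * E (s-n)) - R s)
    (hR : ∀ s, t+1 ≤ s → |R s| ≤ B) :
    ∀ i, 1 ≤ i → |E i| ≤ (i : ℝ) * B := by
  intro i
  induction i using Nat.strong_induction_on with
  | _ i ih =>
    intro hi1
    by_cases hit : i ≤ t
    · rw [hE0 i hi1 hit, abs_zero]
      have : (0:ℝ) ≤ (i:ℝ) := Nat.cast_nonneg i
      nlinarith
    push_neg at hit
    by_cases hit1 : i = t + 1
    · subst hit1
      have hrec := hErec (t+1) (by omega)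
      have hz : ∀ n ∈ Icc 1 t, (-1:ℝ)^(n-1) * a n * E (t+1-n) = 0 := by
        intro n hn
        have h := mem_Icc.1 hn
        rw [hE0 (t+1-n) (by omega) (by omega), mul_zero]
      rw [hrec, sum_congr rfl hz, sum_const_zero, zero_sub, abs_neg]
      have h1 := hR (t+1) le_rfl
      have h2 : (1:ℝ) ≤ ((t+1 : ℕ) : ℝ) := by exact_mod_cast Nat.one_le_iff_ne_zero.2 (by omega)
      nlinarith
    · -- i ≥ t + 2
      have hi2 : t + 2 ≤ i := by omega
      -- the transformed recursion
      have hImg : Icc 2 (t+1) = (Icc 1 t).image (· + 1) := by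
        ext x; simp only [mem_Icc, mem_image]; constructor
        · intro h; exact ⟨x - 1, by omega, by omega⟩
        · rintro ⟨y, hy, rfl⟩; omega
      have h1 : ∑ m ∈ Icc 2 (t+1), (-1:ℝ)^m * a (m-1) * E (i-m)
          = E (i-1) + R (i-1) := by
        rw [hImg, sum_image (fun x _ y _ h => by omega)]
        have hcg : ∀ n ∈ Icc 1 t, (-1:ℝ)^(n+1) * a (n+1-1) * E (i-(n+1))
            = (-1:ℝ)^(n-1) * a n * E ((i-1)-n) := by
          intro n hn
          have h := mem_Icc.1 hn
          obtain ⟨k, rfl⟩ : ∃ k, n = k+1 := ⟨n-1, by omega⟩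
          have e1 : i - (k+1+1) = (i-1) - (k+1) := by omega
          have e2 : (-1:ℝ)^(k+1+1) = (-1:ℝ)^(k+1-1) := by
            rw [pow_succ, pow_succ]
            simp
          rw [e1, e2]
          norm_num
        rw [sum_congr rfl hcg, hErec (i-1) (by omega)]
        ring
      have h2 : ∑ m ∈ Icc 2 (t+1), (-1:ℝ)^m * (if m ≤ t then a m else 0) * E (i-m)
          = -(E i + R i) + a 1 * E (i-1) := by
        have hins : Icc 2 (t+1) = insert (t+1) (Icc 2 t) := by
          ext x; simp only [mem_Icc, mem_insert]; omega
        have hnotmem : t+1 ∉ Icc 2 t := by simp [mem_Icc]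
        rw [hins, sum_insert hnotmem, if_neg (by omega), mul_zero, zero_mul, zero_add]
        have hcg : ∀ m ∈ Icc 2 t, (-1:ℝ)^m * (if m ≤ t then a m else 0) * E (i-m)
            = -((-1:ℝ)^(m-1) * a m * E (i-m)) := by
          intro m hm
          have h := mem_Icc.1 hm
          rw [if_pos h.2]
          obtain ⟨k, rfl⟩ : ∃ k, m = k+1 := ⟨m-1, by omega⟩
          have : (-1:ℝ)^(k+1) = -(-1:ℝ)^(k+1-1) := by
            rw [pow_succ]; simp
          rw [this]
          ring
        rw [sum_congr rfl hcg]
        have hsplit : ∑ n ∈ Icc 1 t, (-1:ℝ)^(n-1) * a n * E (i-n)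
            = (-1:ℝ)^(1-1) * a 1 * E (i-1)
              + ∑ m ∈ Icc 2 t, (-1:ℝ)^(m-1) * a m * E (i-m) := by
          rw [show Icc 1 t = insert 1 (Icc 2 t) by ext x; simp only [mem_Icc, mem_insert]; omega,
            sum_insert (by simp [mem_Icc])]
        have hrec := hErec i (by omega)
        have hsum : ∑ n ∈ Icc 1 t, (-1:ℝ)^(n-1) * a n * E (i-n) = E i + R i := by
          rw [hrec]; ring
        rw [hsplit] at hsum
        rw [sum_neg_distrib]
        norm_num at hsum ⊢
        linarith
      have hWrec : E i
          = (∑ m ∈ Icc 2 (t+1), (-1:ℝ)^m * (a (m-1) - (if m ≤ t then a m else 0)) * E (i-m))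
            - (R i + R (i-1)) := by
        have hcomb : ∑ m ∈ Icc 2 (t+1),
              (-1:ℝ)^m * (a (m-1) - (if m ≤ t then a m else 0)) * E (i-m)
            = (∑ m ∈ Icc 2 (t+1), (-1:ℝ)^m * a (m-1) * E (i-m))
              - ∑ m ∈ Icc 2 (t+1), (-1:ℝ)^m * (if m ≤ t then a m else 0) * E (i-m) := by
          rw [← sum_sub_distrib]
          exact sum_congr rfl fun m _ => by ring
        rw [hcomb, h1, h2, ha1]
        ring
      have hwnn : ∀ m ∈ Icc 2 (t+1), 0 ≤ a (m-1) - (if m ≤ t then a m else 0) := by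
        intro m hm
        have h := mem_Icc.1 hm
        by_cases hmt : m ≤ t
        · rw [if_pos hmt]
          obtain ⟨k, rfl⟩ : ∃ k, m = k+1 := ⟨m-1, by omega⟩
          have : k+1-1 = k := by omega
          rw [this]
          linarith [hmono k]
        · rw [if_neg hmt]
          simpa using hanonneg (m-1)
      have hwsum : ∑ m ∈ Icc 2 (t+1), (a (m-1) - (if m ≤ t then a m else 0)) = 1 := by
        rw [sum_sub_distrib]
        have hA : ∑ m ∈ Icc 2 (t+1), a (m-1) = ∑ n ∈ Icc 1 t, a n := by
          rw [hImg, sum_image (fun x _ y _ h => by omega)]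
          exact sum_congr rfl fun n _ => by norm_num
        have hB2 : ∑ m ∈ Icc 2 (t+1), (if m ≤ t then a m else 0)
            = ∑ m ∈ Icc 2 t, a m := by
          have hins : Icc 2 (t+1) = insert (t+1) (Icc 2 t) := by
            ext x; simp only [mem_Icc, mem_insert]; omega
          rw [hins, sum_insert (by simp [mem_Icc]), if_neg (by omega), zero_add]
          exact sum_congr rfl fun m hm => if_pos (mem_Icc.1 hm).2
        have hC : ∑ n ∈ Icc 1 t, a n = a 1 + ∑ m ∈ Icc 2 t, a m := by
          rw [show Icc 1 t = insert 1 (Icc 2 t) by ext x; simp only [mem_Icc, mem_insert]; omega,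
            sum_insert (by simp [mem_Icc])]
        rw [hA, hB2, hC, ha1]
        ring
      -- the estimate
      have habs : |E i| ≤ (∑ m ∈ Icc 2 (t+1),
            (a (m-1) - (if m ≤ t then a m else 0)) * |E (i-m)|) + (|R i| + |R (i-1)|) := by
        rw [hWrec, sub_eq_add_neg]
        refine (abs_add_le _ _).trans ?_
        rw [abs_neg]
        gcongr
        · refine (abs_sum_le_sum_abs _ _).trans ?_
          refine sum_le_sum fun m hm => ?_
          rw [abs_mul, abs_mul, abs_pow, abs_neg, abs_one, one_pow, one_mul,
            abs_of_nonneg (hwnn m hm)]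
        · exact abs_add_le _ _
      have hterm : ∀ m ∈ Icc 2 (t+1),
          (a (m-1) - (if m ≤ t then a m else 0)) * |E (i-m)|
            ≤ (a (m-1) - (if m ≤ t then a m else 0)) * (((i:ℝ) - 2) * B) := by
        intro m hm
        have h := mem_Icc.1 hm
        refine mul_le_mul_of_nonneg_left ?_ (hwnn m hm)
        have hlt : i - m < i := by omega
        have h1m : 1 ≤ i - m := by omega
        have hih := ih (i-m) hlt h1m
        have hcast : ((i-m : ℕ) : ℝ) ≤ (i:ℝ) - 2 := by
          rw [Nat.cast_sub (by omega)]
          have h2m : (2:ℝ) ≤ (m:ℝ) := by exact_mod_cast h.1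
          linarith
        calc |E (i-m)| ≤ ((i-m : ℕ) : ℝ) * B := hih
          _ ≤ ((i:ℝ) - 2) * B := mul_le_mul_of_nonneg_right hcast hB
      have hsum2 : ∑ m ∈ Icc 2 (t+1),
            (a (m-1) - (if m ≤ t then a m else 0)) * |E (i-m)|
          ≤ ((i:ℝ) - 2) * B := by
        calc ∑ m ∈ Icc 2 (t+1), (a (m-1) - (if m ≤ t then a m else 0)) * |E (i-m)|
            ≤ ∑ m ∈ Icc 2 (t+1),
              (a (m-1) - (if m ≤ t then a m else 0)) * (((i:ℝ) - 2) * B) :=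
              sum_le_sum hterm
          _ = ((i:ℝ) - 2) * B := by rw [← sum_mul, hwsum, one_mul]
      have hR1 := hR i (by omega)
      have hR2 := hR (i-1) (by omega)
      have : |E i| ≤ ((i:ℝ) - 2) * B + (B + B) := by linarith
      linarith

/-- Weighted truncation error: for `t ≥ 1`, the truncated weighted
power-sum sequence satisfies `|P̃M i - PM i| ≤ i (t+1) C a (t+1)` for every
`i ≥ 1`. -/
theorem weighted_truncation_error
    (r t : ℕ) (hr : 1 ≤ r) (ht : 1 ≤ t) (C : ℝ) (hC : 0 < C)
    (p : Fin r → ℝ) (hp : ∀ j, 0 ≤ p j) (hpsum : ∑ j, p j = 1)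
    (m : Fin r → ℝ) (hm : ∀ j, |m j| ≤ C)
    (PM : ℕ → ℝ) (hPM : ∀ i, 1 ≤ i → PM i = ∑ j, m j * p j ^ i)
    (a : ℕ → ℝ)
    (ha : ∀ n, a n = ∑ S ∈ Finset.powersetCard n (Finset.univ : Finset (Fin r)),
      ∏ j ∈ S, p j)
    (PtM : ℕ → ℝ) (hPtM1 : ∀ i, 1 ≤ i → i ≤ t → PtM i = PM i)
    (hPtM2 : ∀ i, t < i →
      PtM i = ∑ n ∈ Icc 1 t, (-1 : ℝ) ^ (n - 1) * a n * PtM (i - n)) :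
    ∀ i, 1 ≤ i →
      |PtM i - PM i| ≤ (i : ℝ) * ((t : ℝ) + 1) * C * a (t + 1) := by
  -- basic facts
  have hanonneg : ∀ n, 0 ≤ a n := fun n => (ha n) ▸ esym_nonneg p hp _ n
  have hp1 : ∀ j, p j ≤ 1 := fun j =>
    hpsum ▸ single_le_sum (f := p) (fun k _ => hp k) (mem_univ j)
  have ha0 : a 0 = 1 := by rw [ha]; simp
  have ha1 : a 1 = 1 := by
    rw [ha 1, powersetCard_one, sum_map]
    simpa using hpsum
  -- the "excluded" elementary symmetric polynomials
  set q : Fin r → ℕ → ℝ :=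
    fun j n => ∑ S ∈ powersetCard n ((univ : Finset (Fin r)).erase j), ∏ k ∈ S, p k with hq
  have hqnonneg : ∀ j n, 0 ≤ q j n := fun j n => esym_nonneg p hp _ n
  have hqle : ∀ j n, q j n ≤ a n := by
    intro j n
    rw [ha, hq]
    exact sum_le_sum_of_subset_of_nonneg
      (powersetCard_mono (erase_subset j univ))
      (fun S _ _ => prod_nonneg fun k _ => hp k)
  have hdouble : ∀ n, ∑ j, p j * q j n = ((n : ℝ)+1) * a (n+1) := by
    intro n
    rw [ha]
    exact esym_double p n
  have hmono : ∀ k, a (k+1) ≤ a k := by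
    intro k
    have h1 := hdouble k
    have h2 : ∑ j, p j * q j k ≤ ∑ j, p j * a k :=
      sum_le_sum fun j _ => mul_le_mul_of_nonneg_left (hqle j k) (hp j)
    rw [← sum_mul, hpsum, one_mul] at h2
    have h3 : ((k : ℝ)+1) * a (k+1) ≤ a k := h1 ▸ h2
    have h4 : (0:ℝ) ≤ (k:ℝ) := Nat.cast_nonneg k
    nlinarith [hanonneg (k+1), mul_nonneg h4 (hanonneg (k+1))]
  set B : ℝ := ((t : ℝ) + 1) * C * a (t+1) with hBdef
  have hB : 0 ≤ B := by
    rw [hBdef]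
    exact mul_nonneg (mul_nonneg (by positivity) hC.le) (hanonneg (t+1))
  set E : ℕ → ℝ := fun i => PtM i - PM i with hE
  set R : ℕ → ℝ :=
    fun s => PM s - ∑ n ∈ Icc 1 t, (-1:ℝ)^(n-1) * a n * PM (s-n) with hRdef
  -- remainder bound
  have hRbound : ∀ s, t+1 ≤ s → |R s| ≤ B := by
    intro s hs
    have hform : R s = ∑ j, m j * (p j ^ (s-t) * ((-1:ℝ)^t * q j t)) := by
      have hstep1 : ∀ n ∈ Icc 1 t, (-1:ℝ)^(n-1) * a n * PM (s-n)
          = ∑ j, (-1:ℝ)^(n-1) * a n * (m j * p j ^ (s-n)) := by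
        intro n hn
        have h := mem_Icc.1 hn
        rw [hPM (s-n) (by omega), mul_sum]
      have hswap : ∑ n ∈ Icc 1 t, (-1:ℝ)^(n-1) * a n * PM (s-n)
          = ∑ j, ∑ n ∈ Icc 1 t, (-1:ℝ)^(n-1) * a n * (m j * p j ^ (s-n)) := by
        rw [sum_congr rfl hstep1, sum_comm]
      rw [hRdef]
      simp only []
      rw [hPM s (by omega), hswap, ← sum_sub_distrib]
      refine sum_congr rfl fun j _ => ?_
      have hps : p j ^ s = p j ^ (s-t) * p j ^ t := by
        rw [← pow_add]
        congr 1
        omega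
      have hkey : p j ^ t - ∑ n ∈ Icc 1 t, (-1:ℝ)^(n-1) * a n * p j ^ (t-n)
          = (-1:ℝ)^t * q j t := by
        have hIccimg : Icc 1 t = (range t).image (· + 1) := by
          ext x; simp only [mem_Icc, mem_image, mem_range]; constructor
          · intro h; exact ⟨x-1, by omega, by omega⟩
          · rintro ⟨y, hy, rfl⟩; omega
        have hr1 : ∑ n ∈ range (t+1), (-1:ℝ)^n * a n * p j ^ (t-n)
            = (-1:ℝ)^t * q j t := by
          simp only [ha, hq]
          exact esym_telescope p j t
        rw [sum_range_succ'] at hr1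
        simp only [pow_zero, one_mul, Nat.sub_zero, ha0] at hr1
        have hre : ∑ n ∈ Icc 1 t, (-1:ℝ)^(n-1) * a n * p j ^ (t-n)
            = - ∑ x ∈ range t, (-1:ℝ)^(x+1) * a (x+1) * p j ^ (t-(x+1)) := by
          rw [hIccimg, sum_image (fun x _ y _ h => by omega), ← sum_neg_distrib]
          refine sum_congr rfl fun x _ => ?_
          have : (-1:ℝ)^(x+1) = -(-1:ℝ)^(x+1-1) := by
            rw [pow_succ]; simp
          rw [this]
          ring
        rw [hre]
        linarith [hr1]
      calc m j * p j ^ s - ∑ n ∈ Icc 1 t, (-1:ℝ)^(n-1) * a n * (m j * p j ^ (s-n))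
          = m j * (p j ^ s - ∑ n ∈ Icc 1 t, (-1:ℝ)^(n-1) * a n * p j ^ (s-n)) := by
            rw [mul_sub, mul_sum]
            congr 1
            exact sum_congr rfl fun n _ => by ring
        _ = m j * (p j ^ (s-t) * (p j ^ t - ∑ n ∈ Icc 1 t, (-1:ℝ)^(n-1) * a n * p j ^ (t-n))) := by
            congr 1
            rw [hps, mul_sub, mul_sum]
            congr 1
            refine sum_congr rfl fun n hn => ?_
            have h := mem_Icc.1 hn
            have hpn : p j ^ (s-n) = p j ^ (s-t) * p j ^ (t-n) := by
              rw [← pow_add]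
              congr 1
              omega
            rw [hpn]
            ring
        _ = m j * (p j ^ (s-t) * ((-1:ℝ)^t * q j t)) := by rw [hkey]
    rw [hform]
    calc |∑ j, m j * (p j ^ (s-t) * ((-1:ℝ)^t * q j t))|
        ≤ ∑ j, |m j * (p j ^ (s-t) * ((-1:ℝ)^t * q j t))| := abs_sum_le_sum_abs _ _
      _ ≤ ∑ j, C * (p j * q j t) := by
          refine sum_le_sum fun j _ => ?_
          rw [abs_mul, abs_mul, abs_mul, abs_pow, abs_pow, abs_neg, abs_one, one_pow,
            one_mul, abs_of_nonneg (hp j), abs_of_nonneg (hqnonneg j t)]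
          have hpow : p j ^ (s-t) ≤ p j := by
            calc p j ^ (s-t) ≤ p j ^ 1 :=
              pow_le_pow_of_le_one (hp j) (hp1 j) (by omega)
            _ = p j := pow_one _
          have h1 : p j ^ (s-t) * q j t ≤ p j * q j t :=
            mul_le_mul_of_nonneg_right hpow (hqnonneg j t)
          have h2 : 0 ≤ p j ^ (s-t) * q j t :=
            mul_nonneg (pow_nonneg (hp j) _) (hqnonneg j t)
          calc |m j| * (p j ^ (s-t) * q j t) ≤ C * (p j ^ (s-t) * q j t) :=
              mul_le_mul_of_nonneg_right (hm j) h2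
            _ ≤ C * (p j * q j t) := mul_le_mul_of_nonneg_left h1 hC.le
      _ = B := by
          rw [← mul_sum, hdouble t, hBdef]
          ring
  -- hypotheses of the abstract sequence lemma
  have hE0 : ∀ i, 1 ≤ i → i ≤ t → E i = 0 := by
    intro i h1 h2
    rw [hE]
    simp [hPtM1 i h1 h2]
  have hErec : ∀ s, t < s → E s = (∑ n ∈ Icc 1 t, (-1:ℝ)^(n-1) * a n * E (s-n)) - R s := by
    intro s hs
    have hsub : ∑ n ∈ Icc 1 t, (-1:ℝ)^(n-1) * a n * E (s-n)
        = (∑ n ∈ Icc 1 t, (-1:ℝ)^(n-1) * a n * PtM (s-n))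
          - ∑ n ∈ Icc 1 t, (-1:ℝ)^(n-1) * a n * PM (s-n) := by
      rw [← sum_sub_distrib]
      refine sum_congr rfl fun n _ => ?_
      rw [hE]
      simp only []
      ring
    rw [hE, hRdef]
    simp only []
    rw [hsub, ← hPtM2 s hs]
    ring
  have hmain := seq_bound t ht B hB a E R ha1 hmono hanonneg hE0 hErec hRbound
  intro i hi
  have := hmain i hi
  rw [hE, hBdef] at this
  simp only [] at this
  calc |PtM i - PM i| ≤ (i:ℝ) * (((t:ℝ)+1) * C * a (t+1)) := this
    _ = (i : ℝ) * ((t : ℝ) + 1) * C * a (t + 1) := by ring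
end
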